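/- Second-order term of the inverse transformation: if w_k = z_k - α P_k(z) with each P_k a polynomial of lower degree at least 2, then the inverse satisfies z_k = w_k + α P_k(w) + α^2 [P_k||P](w) + O(|α|^3 |w|^4), where P = (P_1,...,P_n). -/

import Mathlib

open MvPolynomial Complex

abbrev PolyN (n : ℕ) := MvPolynomial (Fin n ⊕ Fin n) ℂ

/-- Conjugate polynomial: conjugate coefficients and swap each variable `z_j` with `z̄_j`. -/
noncomputable def conjP {n : ℕ} (R : PolyN n) : PolyN n :=
  MvPolynomial.map (starRingEnd ℂ) (rename Sum.swap R)

/-- The bracket `[R‖S]`: formal derivative of `R` along `ż_j = S_j`, `ż̄_j = conj (S_j)`. -/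
noncomputable def bracket {n : ℕ} (R : PolyN n) (S : Fin n → PolyN n) : PolyN n :=
  ∑ j : Fin n, (pderiv (Sum.inl j) R * S j + pderiv (Sum.inr j) R * conjP (S j))

/-- Total degree of a monomial exponent. -/
def mdeg {σ : Type*} (m : σ →₀ ℕ) : ℕ := m.sum fun _ e => e

section Aux
variable {σ : Type*} [DecidableEq σ] {R : Type*} [CommSemiring R] {A : Type*} [CommRing A]
  [Algebra R A]

/-- coeff of aeval only depends on low coefficients of the substituted series. -/
lemma coeff_aeval_congr (f g : σ → PowerSeries A) (t : ℕ)
    (h : ∀ u s, s ≤ t → PowerSeries.coeff s (f u) = PowerSeries.coeff s (g u))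
    (p : MvPolynomial σ R) :
    ∀ s ≤ t, PowerSeries.coeff s (aeval f p) = PowerSeries.coeff s (aeval g p) := by
  induction p using MvPolynomial.induction_on with
  | C a => intro s hs; simp
  | add p q hp hq => intro s hs; simp [map_add, hp s hs, hq s hs]
  | mul_X p u hp =>
      intro s hs
      simp only [map_mul, aeval_X, PowerSeries.coeff_mul]
      refine Finset.sum_congr rfl fun x hx => ?_
      rw [Finset.HasAntidiagonal.mem_antidiagonal] at hx
      rw [hp x.1 (le_trans (by omega) hs), h u x.2 (le_trans (by omega) hs)]

lemma constantCoeff_aeval (f : σ → PowerSeries A) (p : MvPolynomial σ R) :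
    PowerSeries.constantCoeff (aeval f p)
      = aeval (fun u => PowerSeries.constantCoeff (f u)) p := by
  induction p using MvPolynomial.induction_on with
  | C a => simp [PowerSeries.algebraMap_apply]
  | add p q hp hq => simp [map_add, hp, hq]
  | mul_X p u hp => simp [map_mul, hp]

lemma coeff_one_mul (φ ψ : PowerSeries A) :
    PowerSeries.coeff 1 (φ * ψ) =
      PowerSeries.constantCoeff φ * PowerSeries.coeff 1 ψ
        + PowerSeries.coeff 1 φ * PowerSeries.constantCoeff ψ := by
  rw [PowerSeries.coeff_mul]
  rw [show (Finset.HasAntidiagonal.antidiagonal 1 : Finset (ℕ × ℕ)) = {(0,1),(1,0)} from rfl]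
  simp [PowerSeries.coeff_zero_eq_constantCoeff]

lemma coeff_one_aeval [Fintype σ] (f : σ → PowerSeries A) (p : MvPolynomial σ R) :
    PowerSeries.coeff 1 (aeval f p)
      = ∑ u : σ, aeval (fun w => PowerSeries.constantCoeff (f w)) (pderiv u p)
          * PowerSeries.coeff 1 (f u) := by
  induction p using MvPolynomial.induction_on with
  | C a => simp [PowerSeries.algebraMap_apply]
  | add p q hp hq =>
      simp only [map_add, hp, hq, add_mul, ← Finset.sum_add_distrib]
  | mul_X p u hp =>
      rw [map_mul, aeval_X, coeff_one_mul, hp, constantCoeff_aeval]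
      have : ∀ v : σ,
          aeval (fun w => PowerSeries.constantCoeff (f w)) (pderiv v (p * X u))
            * PowerSeries.coeff 1 (f v)
          = aeval (fun w => PowerSeries.constantCoeff (f w)) (pderiv v p)
              * PowerSeries.constantCoeff (f u) * PowerSeries.coeff 1 (f v)
            + (if u = v then aeval (fun w => PowerSeries.constantCoeff (f w)) p
                  * PowerSeries.coeff 1 (f v) else 0) := by
        intro v
        rw [pderiv_mul, pderiv_X]
        by_cases h : u = v <;> simp [h, Pi.single_apply] <;> try ring
      simp only [this, Finset.sum_add_distrib, Finset.sum_ite_eq, Finset.mem_univ, if_true]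
      rw [Finset.sum_mul, add_comm]
      congr 1
      exact Finset.sum_congr rfl fun x _ => by ring

end Aux

section Rf
variable {σ : Type*} [DecidableEq σ] [Fintype σ]

set_option maxHeartbeats 1000000 in
noncomputable def Rf (Q : σ → MvPolynomial σ ℂ) : ℕ → σ → MvPolynomial σ ℂ
  | 0 => fun v => X v
  | (t+1) => fun v =>
      PowerSeries.coeff t
        (aeval (fun u => PowerSeries.mk fun s => if h : s ≤ t then Rf Q s u else 0) (Q v))
  decreasing_by exact Nat.lt_succ_of_le h

set_option maxHeartbeats 1000000 in
lemma Rf_succ (Q : σ → MvPolynomial σ ℂ) (t : ℕ) (v : σ) :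
    Rf Q (t+1) v
      = PowerSeries.coeff t (aeval (fun u => PowerSeries.mk fun s => Rf Q s u) (Q v)) := by
  rw [Rf]
  exact coeff_aeval_congr _ _ t (fun u s hs => by simp [hs]) (Q v) t le_rfl

lemma Rf_fixed (Q : σ → MvPolynomial σ ℂ) (v : σ) :
    PowerSeries.mk (fun t => Rf Q t v)
        - PowerSeries.X * aeval (fun u => PowerSeries.mk fun s => Rf Q s u) (Q v)
      = PowerSeries.C (X v) := by
  ext t
  cases t with
  | zero =>
      simp [PowerSeries.coeff_zero_X_mul, PowerSeries.coeff_C, Rf]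
  | succ s =>
      simp [PowerSeries.coeff_succ_X_mul, PowerSeries.coeff_C, Rf_succ]

lemma Rf_one (Q : σ → MvPolynomial σ ℂ) (v : σ) : Rf Q 1 v = Q v := by
  rw [Rf_succ, PowerSeries.coeff_zero_eq_constantCoeff, constantCoeff_aeval]
  have : (fun u => PowerSeries.constantCoeff (PowerSeries.mk fun s => Rf Q s u))
      = fun u => (X u : MvPolynomial σ ℂ) := by
    funext u; simp [Rf]
  rw [this, aeval_X_left_apply]

lemma Rf_two (Q : σ → MvPolynomial σ ℂ) (v : σ) :
    Rf Q 2 v = ∑ u : σ, pderiv u (Q v) * Q u := by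
  rw [Rf_succ, coeff_one_aeval]
  have h0 : (fun u => PowerSeries.constantCoeff (PowerSeries.mk fun s => Rf Q s u))
      = fun u => (X u : MvPolynomial σ ℂ) := by
    funext u; simp [Rf]
  refine Finset.sum_congr rfl fun u _ => ?_
  rw [h0, aeval_X_left_apply]
  simp [Rf_one]

section Deg
variable {σ : Type*} [DecidableEq σ] [Fintype σ]

def mdeg' {σ : Type*} (m : σ →₀ ℕ) : ℕ := m.sum fun _ e => e

lemma mdeg'_add {m₁ m₂ : σ →₀ ℕ} : mdeg' (m₁ + m₂) = mdeg' m₁ + mdeg' m₂ :=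
  Finsupp.sum_add_index' (fun _ => rfl) (fun _ _ _ => rfl)

lemma mdeg'_single (u : σ) (e : ℕ) : mdeg' (Finsupp.single u e) = e := by
  simp [mdeg', Finsupp.sum_single_index]

lemma mdeg'_eq_sum (m : σ →₀ ℕ) : mdeg' m = ∑ u : σ, m u :=
  Finsupp.sum_fintype _ _ fun _ => rfl

/-- `Good d F`: the `t`-th coefficient of `F` has min-degree at least `t + d`. -/
def Good (d : ℕ) (F : PowerSeries (MvPolynomial σ ℂ)) : Prop :=
  ∀ t m, m ∈ (PowerSeries.coeff t F).support → t + d ≤ mdeg' m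

lemma Good.mono {d d' : ℕ} (h : d' ≤ d) {F : PowerSeries (MvPolynomial σ ℂ)}
    (hF : Good d F) : Good d' F :=
  fun t m hm => le_trans (by omega) (hF t m hm)

lemma Good.mul {d e : ℕ} {F G : PowerSeries (MvPolynomial σ ℂ)}
    (hF : Good d F) (hG : Good e G) : Good (d + e) (F * G) := by
  intro t m hm
  rw [PowerSeries.coeff_mul] at hm
  obtain ⟨x, hx, hm⟩ := Finset.mem_biUnion.mp (MvPolynomial.support_sum hm)
  rw [Finset.HasAntidiagonal.mem_antidiagonal] at hx
  have := MvPolynomial.support_mul _ _ hm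
  rw [Finset.mem_add] at this
  obtain ⟨a, ha, b, hb, rfl⟩ := this
  have h1 := hF x.1 a ha
  have h2 := hG x.2 b hb
  rw [mdeg'_add]; omega

lemma Good.C' (p : MvPolynomial σ ℂ) : Good 0 (PowerSeries.C p) := by
  intro t m hm
  rcases t with - | t
  · omega
  · simp [PowerSeries.coeff_C] at hm


lemma Good.pow {d e : ℕ} {F : PowerSeries (MvPolynomial σ ℂ)} (hF : Good d F) :
    Good (e * d) (F ^ e) := by
  induction e with
  | zero =>
      intro t m hm
      rw [pow_zero, ← map_one (PowerSeries.C (R := MvPolynomial σ ℂ))] at hm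
      simpa using Good.C' (1 : MvPolynomial σ ℂ) t m hm
  | succ e ih =>
      rw [pow_succ]
      have := ih.mul hF
      simpa [add_mul, one_mul, Nat.succ_mul] using this

lemma Good.sum {d : ℕ} {α : Type*} (s : Finset α) (f : α → PowerSeries (MvPolynomial σ ℂ))
    (h : ∀ a ∈ s, Good d (f a)) : Good d (∑ a ∈ s, f a) := by
  intro t m hm
  rw [map_sum] at hm
  have := MvPolynomial.support_sum hm
  rw [Finset.mem_biUnion] at this
  obtain ⟨a, ha, hma⟩ := this
  exact h a ha t m hma

lemma good_algebraMap (c : ℂ) :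
    Good 0 ((algebraMap ℂ (PowerSeries (MvPolynomial σ ℂ))) c) := by
  have : (algebraMap ℂ (PowerSeries (MvPolynomial σ ℂ))) c
      = PowerSeries.C (MvPolynomial.C c) := by
    rw [PowerSeries.algebraMap_apply, MvPolynomial.algebraMap_eq]
  rw [this]; exact Good.C' _

lemma Good.prod {α : Type*} (s : Finset α) (g : α → ℕ)
    (f : α → PowerSeries (MvPolynomial σ ℂ)) (h : ∀ a ∈ s, Good (g a) (f a)) :
    Good (∑ a ∈ s, g a) (∏ a ∈ s, f a) := by
  classical
  induction s using Finset.induction_on with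
  | empty => simpa using Good.C' (1 : MvPolynomial σ ℂ)
  | @insert a s' hx ih =>
      rw [Finset.sum_insert hx, Finset.prod_insert hx]
      exact (h a (Finset.mem_insert_self a s')).mul
        (ih fun b hb => h b (Finset.mem_insert_of_mem hb))

lemma Good.aeval {d : ℕ} (p : MvPolynomial σ ℂ) (hp : ∀ m ∈ p.support, d ≤ mdeg' m)
    (f : σ → PowerSeries (MvPolynomial σ ℂ)) (hf : ∀ u, Good 1 (f u)) :
    Good d (aeval f p) := by
  rw [aeval_def, eval₂_eq' (algebraMap ℂ (PowerSeries (MvPolynomial σ ℂ))) f p]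
  refine Good.sum _ _ fun m hm => ?_
  have h1 : Good (mdeg' m) (∏ u : σ, f u ^ m u) := by
    have := Good.prod Finset.univ (fun u => m u) (fun u => f u ^ m u)
      (fun u _ => by simpa using (hf u).pow (e := m u))
    rwa [← mdeg'_eq_sum] at this
  have h2 := (good_algebraMap (σ := σ) (p.coeff m)).mul h1
  rw [zero_add] at h2
  exact (h2.mono (hp m hm))

lemma Rf_deg (Q : σ → MvPolynomial σ ℂ) (hQ : ∀ v, ∀ m ∈ (Q v).support, 2 ≤ mdeg' m) :
    ∀ t, 1 ≤ t → ∀ v, ∀ m ∈ (Rf Q t v).support, t + 1 ≤ mdeg' m := by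
  intro t
  induction t using Nat.strong_induction_on with
  | _ t ih =>
      rcases t with - | s
      · omega
      intro _ v m hm
      rw [Rf] at hm
      have hgood : ∀ u, Good 1 (PowerSeries.mk fun s' =>
          if h : s' ≤ s then Rf Q s' u else 0) := by
        intro u t' m' hm'
        simp only [PowerSeries.coeff_mk] at hm'
        by_cases h : t' ≤ s
        · rw [dif_pos h] at hm'
          rcases t' with - | t''
          · have : Rf Q 0 u = X u := by rw [Rf]
            rw [this, MvPolynomial.support_X] at hm'
            simp only [Finset.mem_singleton] at hm'
            subst hm'
            simp [mdeg'_single]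
          · have := ih (t''+1) (by omega) (by omega) u m' hm'
            omega
        · rw [dif_neg h] at hm'
          simp at hm'
      have := (Good.aeval (Q v) (hQ v) _ hgood) s m hm
      omega

lemma Rf_deg' (Q : σ → MvPolynomial σ ℂ) (hQ : ∀ v, ∀ m ∈ (Q v).support, 2 ≤ mdeg' m)
    (t : ℕ) (ht : 3 ≤ t) (v : σ) (m : σ →₀ ℕ) (hm : m ∈ (Rf Q t v).support) :
    4 ≤ mdeg' m := by
  have := Rf_deg Q hQ t (by omega) v m hm
  omega

end Deg


lemma mdeg_eq_mdeg' {σ : Type*} (m : σ →₀ ℕ) : mdeg m = mdeg' m := rfl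

lemma conjP_support_mdeg {n : ℕ} (Rp : PolyN n) (d : ℕ)
    (h : ∀ m ∈ Rp.support, d ≤ mdeg m) :
    ∀ m ∈ (conjP Rp).support, d ≤ mdeg m := by
  intro m hm
  have hinj : Function.Injective (Sum.swap : Fin n ⊕ Fin n → Fin n ⊕ Fin n) :=
    fun a b hab => by simpa using congrArg Sum.swap hab
  have h1 := MvPolynomial.support_map_subset _ _ hm
  rw [MvPolynomial.support_rename_of_injective hinj, Finset.mem_image] at h1
  obtain ⟨m', hm', rfl⟩ := h1
  have : mdeg (Finsupp.mapDomain Sum.swap m') = mdeg m' :=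
    Finsupp.sum_mapDomain_index (fun _ => rfl) (fun _ _ _ => rfl)
  rw [this]
  exact h m' hm'

/-- Second-order term of the inverse transformation: if `w_k = z_k - α P_k(z)` with each `P_k`
of lower degree at least 2, the formal inverse is
`z_k = w_k + α P_k(w) + α² [P_k‖P](w) + O(α³)` with all order-`α^t`, `t ≥ 3`, terms of lower
degree at least 4. -/
theorem inverse_second_order (n : ℕ) (P : Fin n → PolyN n)
    (hP : ∀ k, ∀ m ∈ (P k).support, 2 ≤ mdeg m) (k : Fin n) :
    ∃ R : (Fin n ⊕ Fin n) → ℕ → PolyN n,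
      (∀ v, R v 0 = X v) ∧
      (∀ k', R (Sum.inl k') 1 = P k') ∧
      (∀ k', R (Sum.inr k') 1 = conjP (P k')) ∧
      R (Sum.inl k) 2 = bracket (P k) P ∧
      (∀ t, 3 ≤ t → ∀ m ∈ (R (Sum.inl k) t).support, 4 ≤ mdeg m) ∧
      (∀ k' : Fin n,
        PowerSeries.mk (R (Sum.inl k'))
            - PowerSeries.X * MvPolynomial.aeval (fun v => PowerSeries.mk (R v)) (P k')
          = PowerSeries.C (X (Sum.inl k') : PolyN n)) ∧
      (∀ k' : Fin n,
        PowerSeries.mk (R (Sum.inr k'))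
            - PowerSeries.X * MvPolynomial.aeval (fun v => PowerSeries.mk (R v)) (conjP (P k'))
          = PowerSeries.C (X (Sum.inr k') : PolyN n)) := by
  set Q : (Fin n ⊕ Fin n) → PolyN n := Sum.elim (fun j => P j) (fun j => conjP (P j)) with hQdef
  have hQ : ∀ v, ∀ m ∈ (Q v).support, 2 ≤ mdeg' m := by
    rintro (j | j) m hm
    · exact hP j m hm
    · exact conjP_support_mdeg (P j) 2 (hP j) m hm
  refine ⟨fun v t => Rf Q t v, ?_, ?_, ?_, ?_, ?_, ?_, ?_⟩
  · intro v; show Rf Q 0 v = X v; rw [Rf]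
  · intro k'; show Rf Q 1 (Sum.inl k') = P k'; rw [Rf_one]; rfl
  · intro k'; show Rf Q 1 (Sum.inr k') = conjP (P k'); rw [Rf_one]; rfl
  · show Rf Q 2 (Sum.inl k) = bracket (P k) P
    rw [Rf_two]
    show ∑ u : Fin n ⊕ Fin n, pderiv u (Q (Sum.inl k)) * Q u = bracket (P k) P
    have : Q (Sum.inl k) = P k := rfl
    rw [this, Fintype.sum_sum_type, bracket, Finset.sum_add_distrib]
    rfl
  · intro t ht m hm
    exact Rf_deg' Q hQ t ht (Sum.inl k) m hm
  · intro k'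
    exact Rf_fixed Q (Sum.inl k')
  · intro k'
    exact Rf_fixed Q (Sum.inr k')
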